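/- Stability constraint on multiplicities as partition condition: a weakly decreasing sequence of nonnegative integers (m₁ ≥ m₂ ≥ ⋯) in which consecutive values satisfy m_i - m_{i+1} ∈ {0,1} corresponds bijectively, via conjugation, to a partition whose parts are the column lengths, and the condition 'any two adjacent edges in a common inside hexagon have multiplicities equal or differing by one' for ALL pairs (m_{2i-1}, m_{2i}) is equivalent to the conjugate partition having all odd parts distinct. -/
import Mathlib

private lemma key_aux (N : ℕ) (m : ℕ → ℕ)
    (hdec : ∀ i j, i ≤ j → m j ≤ m i)
    (hsupp : ∀ i, N ≤ i → m i = 0)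
    (j k : ℕ)
    (h : ((Finset.range N).filter (fun i => j + 1 ≤ m i)).card = 2 * k + 1) :
    j + 1 ≤ m (2 * k) ∧ m (2 * k + 1) ≤ j := by
  constructor
  · by_contra hc
    push_neg at hc
    have hsub : (Finset.range N).filter (fun i => j + 1 ≤ m i) ⊆ Finset.range (2 * k) := by
      intro i hi
      simp only [Finset.mem_filter, Finset.mem_range] at hi ⊢
      by_contra hik
      push_neg at hik
      have := hdec _ _ hik
      omega
    have := Finset.card_le_card hsub
    rw [h, Finset.card_range] at this
    omega
  · by_contra hc
    push_neg at hc
    have hN : 2 * k + 1 < N := by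
      by_contra hN
      push_neg at hN
      have := hsupp _ hN
      omega
    have hsub : Finset.range (2 * k + 2) ⊆ (Finset.range N).filter (fun i => j + 1 ≤ m i) := by
      intro i hi
      simp only [Finset.mem_range] at hi
      simp only [Finset.mem_filter, Finset.mem_range]
      have := hdec i (2 * k + 1) (by omega)
      exact ⟨by omega, by omega⟩
    have := Finset.card_le_card hsub
    rw [h, Finset.card_range] at this
    omega

/-- Stability constraint on multiplicities as a partition condition.  Let
`m₀ ≥ m₁ ≥ ⋯` be a weakly decreasing sequence of nonnegative integers (inside
thickenings along a branch) vanishing from index `N` on, and let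
`μ j = #{i < N : m i ≥ j}` be its conjugate partition.  Then the multiplicities of
each pair of adjacent edges lying in a common inside hexagon are equal or differ by one
— i.e. `m (2i) = m (2i+1)` or `m (2i) = m (2i+1) + 1` for all `i` (1-indexed pairs
`(m_{2i-1}, m_{2i})`) — if and only if all odd parts of the conjugate partition `μ`
are distinct (every odd value occurs at most once among `μ 1, μ 2, …`). -/
theorem multiplicity_pairs_iff_conjugate_distinct_odd
    (N : ℕ) (m : ℕ → ℕ)
    (hdec : ∀ i j, i ≤ j → m j ≤ m i)
    (hsupp : ∀ i, N ≤ i → m i = 0) :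
    (∀ i : ℕ, m (2 * i) = m (2 * i + 1) ∨ m (2 * i) = m (2 * i + 1) + 1) ↔
    (∀ v, Odd v →
      ((Finset.range (m 0 + 1)).filter
        (fun j => ((Finset.range N).filter (fun i => j + 1 ≤ m i)).card = v)).card ≤ 1) := by
  constructor
  · intro hA v hv
    rw [Finset.card_le_one]
    intro a ha b hb
    simp only [Finset.mem_filter, Finset.mem_range] at ha hb
    by_contra hne
    obtain ⟨k, hk⟩ := hv
    have main : ∀ a b : ℕ, a < b →
        ((Finset.range N).filter (fun i => a + 1 ≤ m i)).card = v →
        ((Finset.range N).filter (fun i => b + 1 ≤ m i)).card = v → False := by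
      intro a b hab hfa hfb
      have hmono : ((Finset.range N).filter (fun i => b + 1 ≤ m i)).card ≤
          ((Finset.range N).filter (fun i => a + 1 + 1 ≤ m i)).card := by
        apply Finset.card_le_card
        intro x hx
        simp only [Finset.mem_filter] at hx ⊢
        exact ⟨hx.1, by omega⟩
      have hmono2 : ((Finset.range N).filter (fun i => a + 1 + 1 ≤ m i)).card ≤
          ((Finset.range N).filter (fun i => a + 1 ≤ m i)).card := by
        apply Finset.card_le_card
        intro x hx
        simp only [Finset.mem_filter] at hx ⊢
        exact ⟨hx.1, by omega⟩
      have hfa1 : ((Finset.range N).filter (fun i => a + 1 + 1 ≤ m i)).card = v := by omega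
      have h1 := key_aux N m hdec hsupp a k (by rw [hfa]; omega)
      have h2 := key_aux N m hdec hsupp (a + 1) k (by rw [hfa1]; omega)
      rcases hA k with h | h <;> omega
    rcases Nat.lt_or_ge a b with h | h
    · exact main a b h ha.2 hb.2
    · exact main b a (by omega) hb.2 ha.2
  · intro hB i
    by_contra hc
    push_neg at hc
    have hle : m (2 * i + 1) ≤ m (2 * i) := hdec _ _ (by omega)
    have hgap : m (2 * i + 1) + 2 ≤ m (2 * i) := by omega
    set a := m (2 * i + 1) with ha
    have hfilter : ∀ c, a + 1 ≤ c → c ≤ a + 2 →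
        (Finset.range N).filter (fun i' => c ≤ m i') = Finset.range (2 * i + 1) := by
      intro c hc1 hc2
      ext x
      simp only [Finset.mem_filter, Finset.mem_range]
      constructor
      · rintro ⟨hxN, hxm⟩
        by_contra hx
        push_neg at hx
        have := hdec (2 * i + 1) x (by omega)
        omega
      · intro hx
        have h1 : m (2 * i) ≤ m x := hdec _ _ (by omega)
        have hxN : x < N := by
          by_contra hxN
          push_neg at hxN
          have := hsupp x hxN
          omega
        exact ⟨hxN, by omega⟩
    have h1 : ((Finset.range N).filter (fun i' => a + 1 ≤ m i')).card = 2 * i + 1 := by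
      rw [hfilter (a + 1) (by omega) (by omega), Finset.card_range]
    have h2 : ((Finset.range N).filter (fun i' => a + 1 + 1 ≤ m i')).card = 2 * i + 1 := by
      rw [hfilter (a + 1 + 1) (by omega) (by omega), Finset.card_range]
    have hB' := hB (2 * i + 1) ⟨i, by omega⟩
    rw [Finset.card_le_one] at hB'
    have hma : a ∈ (Finset.range (m 0 + 1)).filter
        (fun j => ((Finset.range N).filter (fun i => j + 1 ≤ m i)).card = 2 * i + 1) := by
      simp only [Finset.mem_filter, Finset.mem_range]
      have := hdec 0 (2 * i + 1) (by omega)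
      exact ⟨by omega, h1⟩
    have hma1 : a + 1 ∈ (Finset.range (m 0 + 1)).filter
        (fun j => ((Finset.range N).filter (fun i => j + 1 ≤ m i)).card = 2 * i + 1) := by
      simp only [Finset.mem_filter, Finset.mem_range]
      have := hdec 0 (2 * i) (by omega)
      exact ⟨by omega, h2⟩
    have : a = a + 1 := hB' _ hma _ hma1
    omega
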